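/- Let K be a field of characteristic zero, r ≥ 2, and let L be the free nilpotent Lie algebra of rank r and step 3 over K with generators X_1, …, X_r, G_1 the span of the generators, and V = C_1(L). Let p ∈ L* be such that the linear map β : V → G_1*, η ↦ (x ↦ p(⁅x,η⁆))|_{G_1}, is surjective. Then the dimension of the radical {v ∈ L : p(⁅w,v⁆) = 0 for all w ∈ L} of B_p equals dim L − 2r; equivalently, the skew-symmetric form B_p has rank 2r (so the coadjoint orbit through such a generic p has dimension 2r). -/

import Mathlib

/-- The free nilpotent Lie algebra of rank `r` and step `s` over `K`: the quotient of the
free Lie algebra `F` on `r` generators by the `s`-th term `C_s(F)` of its lower central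
series (`C_0 = F`, `C_{k+1} = ⁅F, C_k⁆`). -/
abbrev FreeNilpotentLie (K : Type*) [Field K] (r s : ℕ) :=
  FreeLieAlgebra K (Fin r) ⧸
    LieModule.lowerCentralSeries K (FreeLieAlgebra K (Fin r)) (FreeLieAlgebra K (Fin r)) s

/-- The canonical generators `X_1, …, X_r` of the free nilpotent Lie algebra, i.e. the images
of the free generators. -/
noncomputable def FreeNilpotentLie.gen (K : Type*) [Field K] (r s : ℕ) (i : Fin r) :
    FreeNilpotentLie K r s :=
  LieSubmodule.Quotient.mk' _ (FreeLieAlgebra.of K i)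

/-- `G₁`: the `K`-span of the generators. -/
noncomputable def FreeNilpotentLie.G1 (K : Type*) [Field K] (r s : ℕ) :
    Submodule K (FreeNilpotentLie K r s) :=
  Submodule.span K (Set.range (FreeNilpotentLie.gen K r s))


/-- The radical of the skew form `B_p(x, y) = p ⁅x, y⁆`. -/
noncomputable def radicalBp {K L : Type*} [Field K] [LieRing L] [LieAlgebra K L]
    (p : Module.Dual K L) : Submodule K L where
  carrier := {v | ∀ w : L, p ⁅w, v⁆ = 0}
  add_mem' := fun {a b} ha hb w => by simp [lie_add, ha w, hb w]
  zero_mem' := fun w => by simp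
  smul_mem' := fun c x hx w => by simp [lie_smul, hx w]

/-- `{ξ | ∀ η ∈ S, p ⁅ξ, η⁆ = 0}` as a subspace. -/
noncomputable def perpRight {K L : Type*} [Field K] [LieRing L] [LieAlgebra K L]
    (p : Module.Dual K L) (S : Set L) : Submodule K L where
  carrier := {ξ : L | ∀ η ∈ S, p ⁅ξ, η⁆ = 0}
  add_mem' := fun {a b} ha hb η hη => by simp [add_lie, ha η hη, hb η hη]
  zero_mem' := fun η hη => by simp
  smul_mem' := fun c x hx η hη => by simp [smul_lie, hx η hη]

/-- `{η | ∀ ξ ∈ S, p ⁅ξ, η⁆ = 0}` as a subspace. -/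
noncomputable def perpLeft {K L : Type*} [Field K] [LieRing L] [LieAlgebra K L]
    (p : Module.Dual K L) (S : Set L) : Submodule K L where
  carrier := {η : L | ∀ ξ ∈ S, p ⁅ξ, η⁆ = 0}
  add_mem' := fun {a b} ha hb ξ hξ => by simp [lie_add, ha ξ hξ, hb ξ hξ]
  zero_mem' := fun ξ hξ => by simp
  smul_mem' := fun c x hx ξ hξ => by simp [lie_smul, hx ξ hξ]


attribute [local instance 100] LieRing.ofAssociativeRing

open Module

section FreeStuff

variable (K : Type*) [Field K] (r : ℕ)

/-- The free Lie algebra is generated by the images of `of`. -/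
lemma freeLie_lieSpan_top :
    LieSubalgebra.lieSpan K (FreeLieAlgebra K (Fin r)) (Set.range (FreeLieAlgebra.of K)) = ⊤ := by
  set A := LieSubalgebra.lieSpan K (FreeLieAlgebra K (Fin r)) (Set.range (FreeLieAlgebra.of K))
  have hmem : ∀ i : Fin r, FreeLieAlgebra.of K i ∈ A :=
    fun i => LieSubalgebra.subset_lieSpan (Set.mem_range_self i)
  let f : FreeLieAlgebra K (Fin r) →ₗ⁅K⁆ A :=
    FreeLieAlgebra.lift K (fun i => ⟨FreeLieAlgebra.of K i, hmem i⟩)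
  have key : A.incl.comp f = LieHom.id := by
    apply FreeLieAlgebra.hom_ext
    intro x
    simp [f, FreeLieAlgebra.lift_of_apply]
  rw [eq_top_iff]
  intro x _
  have : A.incl (f x) = x := by
    have := LieHom.congr_fun key x
    simpa using this
  rw [← this]
  exact (f x).2

end FreeStuff

section Nil3

variable (K : Type*) [Field K] (r : ℕ)

local notation "F" => FreeLieAlgebra K (Fin r)
local notation "N3" => LieModule.lowerCentralSeries K (FreeLieAlgebra K (Fin r)) (FreeLieAlgebra K (Fin r)) 3
local notation "L3" => FreeNilpotentLie K r 3

variable {K r} in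
lemma mk_surj : Function.Surjective
    (LieSubmodule.Quotient.mk (N := N3) : FreeLieAlgebra K (Fin r) → FreeNilpotentLie K r 3) :=
  Submodule.Quotient.mk_surjective _

/-- Quadruple brackets vanish in the free 3-step nilpotent Lie algebra. -/
lemma quad_bracket (a b c d : FreeNilpotentLie K r 3) : ⁅a, ⁅b, ⁅c, d⁆⁆⁆ = 0 := by
  obtain ⟨a', rfl⟩ := mk_surj a
  obtain ⟨b', rfl⟩ := mk_surj b
  obtain ⟨c', rfl⟩ := mk_surj c
  obtain ⟨d', rfl⟩ := mk_surj d
  rw [← LieSubmodule.Quotient.mk_bracket, ← LieSubmodule.Quotient.mk_bracket,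
    ← LieSubmodule.Quotient.mk_bracket, LieSubmodule.Quotient.mk_eq_zero']
  have h1 : ⁅c', d'⁆ ∈ LieModule.lowerCentralSeries K (FreeLieAlgebra K (Fin r)) (FreeLieAlgebra K (Fin r)) 1 := by
    rw [LieModule.lowerCentralSeries_succ]
    exact LieSubmodule.lie_mem_lie (LieSubmodule.mem_top _)
      (by rw [LieModule.lowerCentralSeries_zero]; exact LieSubmodule.mem_top _)
  have h2 : ⁅b', ⁅c', d'⁆⁆ ∈ LieModule.lowerCentralSeries K (FreeLieAlgebra K (Fin r)) (FreeLieAlgebra K (Fin r)) 2 := by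
    rw [LieModule.lowerCentralSeries_succ]
    exact LieSubmodule.lie_mem_lie (LieSubmodule.mem_top _) h1
  rw [show (3 : ℕ) = 2 + 1 from rfl, LieModule.lowerCentralSeries_succ]
  exact LieSubmodule.lie_mem_lie (LieSubmodule.mem_top _) h2

lemma derived_abelian (a b c d : FreeNilpotentLie K r 3) : ⁅⁅a, b⁆, ⁅c, d⁆⁆ = 0 := by
  rw [lie_lie]
  simp [quad_bracket]

end Nil3


section Gen

variable (K : Type*) [Field K] (r : ℕ)

lemma gen_lieSpan_top (s : ℕ) :
    LieSubalgebra.lieSpan K (FreeNilpotentLie K r s)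
      (Set.range (FreeNilpotentLie.gen K r s)) = ⊤ := by
  set A := LieSubalgebra.lieSpan K (FreeNilpotentLie K r s)
      (Set.range (FreeNilpotentLie.gen K r s)) with hA
  set N := LieModule.lowerCentralSeries K (FreeLieAlgebra K (Fin r)) (FreeLieAlgebra K (Fin r)) s
  let P : LieSubalgebra K (FreeLieAlgebra K (Fin r)) :=
    { carrier := {y | (LieSubmodule.Quotient.mk (N := N) y : FreeNilpotentLie K r s) ∈ A}
      add_mem' := fun {a b} ha hb => by
        show N.toSubmodule.mkQ (a + b) ∈ A
        rw [map_add]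
        exact A.add_mem ha hb
      zero_mem' := by
        show N.toSubmodule.mkQ 0 ∈ A
        rw [map_zero]
        exact A.zero_mem
      smul_mem' := fun c x hx => by
        show N.toSubmodule.mkQ (c • x) ∈ A
        rw [map_smul]
        exact A.smul_mem c hx
      lie_mem' := fun {x y} hx hy => by
        show (LieSubmodule.Quotient.mk (N := N) ⁅x, y⁆ : FreeNilpotentLie K r s) ∈ A
        rw [LieSubmodule.Quotient.mk_bracket]
        exact A.lie_mem hx hy }
  have hP : LieSubalgebra.lieSpan K (FreeLieAlgebra K (Fin r))
      (Set.range (FreeLieAlgebra.of K)) ≤ P := by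
    rw [LieSubalgebra.lieSpan_le]
    rintro _ ⟨i, rfl⟩
    exact LieSubalgebra.subset_lieSpan (Set.mem_range_self i)
  rw [freeLie_lieSpan_top] at hP
  rw [eq_top_iff]
  rintro x -
  obtain ⟨y, rfl⟩ := (Submodule.Quotient.mk_surjective _ :
    Function.Surjective (LieSubmodule.Quotient.mk (N := N))) x
  exact hP (LieSubalgebra.mem_top y)

lemma gen_linearIndependent : LinearIndependent K (FreeNilpotentLie.gen K r 3) := by
  classical
  rw [Fintype.linearIndependent_iff]
  intro c hc
  set F := FreeLieAlgebra K (Fin r)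
  let ℓ : F →ₗ⁅K⁆ (Fin r → K) := FreeLieAlgebra.lift K (fun i => Pi.single i 1)
  have hker : ∀ x ∈ LieModule.lowerCentralSeries K F F 1, ℓ x = 0 := by
    intro x hx
    rw [LieModule.lowerCentralSeries_succ, LieModule.lowerCentralSeries_zero] at hx
    rw [← LieSubmodule.mem_toSubmodule, LieSubmodule.lieIdeal_oper_eq_linear_span'] at hx
    have hx' := hx
    refine Submodule.span_induction ?_ ?_ ?_ ?_ hx'
    · rintro m ⟨u, -, v, -, rfl⟩
      rw [LieHom.map_lie]
      simp [Ring.lie_def, mul_comm]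
    · simp
    · intro a b _ _ ha hb; rw [map_add, ha, hb, add_zero]
    · intro t a _ ha; rw [map_smul, ha, smul_zero]
  have hmem : (∑ i, c i • FreeLieAlgebra.of K i) ∈
      LieModule.lowerCentralSeries K F F 3 := by
    rw [← LieSubmodule.Quotient.mk_eq_zero']
    have : (LieSubmodule.Quotient.mk (N := LieModule.lowerCentralSeries K F F 3)
        (∑ i, c i • FreeLieAlgebra.of K i) : FreeNilpotentLie K r 3)
        = ∑ i, c i • FreeNilpotentLie.gen K r 3 i := by
      show (LieModule.lowerCentralSeries K F F 3).toSubmodule.mkQ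
          (∑ i, c i • FreeLieAlgebra.of K i) = _
      rw [map_sum]
      refine Finset.sum_congr rfl fun i _ => ?_
      rw [map_smul]
      rfl
    rw [this, hc]
  have hmem1 : (∑ i, c i • FreeLieAlgebra.of K i) ∈
      LieModule.lowerCentralSeries K F F 1 :=
    LieModule.antitone_lowerCentralSeries K F F (by norm_num : 1 ≤ 3) hmem
  have hℓ : ℓ.toLinearMap (∑ i, c i • FreeLieAlgebra.of K i)
      = ∑ i, c i • (Pi.single i 1 : Fin r → K) := by
    rw [map_sum]
    refine Finset.sum_congr rfl fun i _ => ?_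
    rw [map_smul]
    simp only [LieHom.coe_toLinearMap, ℓ]
    rw [FreeLieAlgebra.lift_of_apply]
  have h0 : (∑ i, c i • (Pi.single i 1 : Fin r → K)) = 0 := by
    rw [← hℓ]; exact hker _ hmem1
  intro j
  have := congrFun h0 j
  simpa [Pi.single_apply] using this

end Gen


section GenericHelpers

variable {K : Type*} [Field K] {L : Type*} [LieRing L] [LieAlgebra K L]

lemma lie_mem_lcs1_gen (x y : L) : ⁅x, y⁆ ∈ LieModule.lowerCentralSeries K L L 1 := by
  rw [LieModule.lowerCentralSeries_succ, LieModule.lowerCentralSeries_zero]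
  exact LieSubmodule.lie_mem_lie (LieSubmodule.mem_top _) (LieSubmodule.mem_top _)

lemma mem_lcs1_span {u : L} (hu : u ∈ LieModule.lowerCentralSeries K L L 1) :
    u ∈ Submodule.span K {m : L | ∃ x ∈ (⊤ : LieIdeal K L),
      ∃ n ∈ (⊤ : LieSubmodule K L L), ⁅x, n⁆ = m} := by
  rw [LieModule.lowerCentralSeries_succ, LieModule.lowerCentralSeries_zero,
    ← LieSubmodule.mem_toSubmodule, LieSubmodule.lieIdeal_oper_eq_linear_span'] at hu
  exact hu

lemma lcs1_abelian_of (habel : ∀ a b c d : L, ⁅⁅a, b⁆, ⁅c, d⁆⁆ = 0) :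
    ∀ u ∈ LieModule.lowerCentralSeries K L L 1,
    ∀ v ∈ LieModule.lowerCentralSeries K L L 1, ⁅u, v⁆ = (0 : L) := by
  intro u hu' v hv'
  have hu := mem_lcs1_span hu'
  have hv := mem_lcs1_span hv'
  have aux : ∀ x y : L, ⁅⁅x, y⁆, v⁆ = (0 : L) := by
    intro x y
    refine Submodule.span_induction ?_ ?_ ?_ ?_ hv
    · rintro m ⟨a, -, b, -, rfl⟩
      exact habel x y a b
    · exact lie_zero _
    · intro a b _ _ ha hb; rw [lie_add, ha, hb, add_zero]
    · intro t a _ ha; rw [lie_smul, ha, smul_zero]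
  refine Submodule.span_induction ?_ ?_ ?_ ?_ hu
  · rintro m ⟨a, -, b, -, rfl⟩
    exact aux a b
  · exact zero_lie _
  · intro a b _ _ ha hb; rw [add_lie, ha, hb, add_zero]
  · intro t a _ ha; rw [smul_lie, ha, smul_zero]

lemma span_lie_closed {ι : Type*} (f : ι → L)
    (hbase : ∀ α β, ⁅f α, f β⁆ ∈ Submodule.span K (Set.range f)) :
    ∀ x ∈ Submodule.span K (Set.range f), ∀ y ∈ Submodule.span K (Set.range f),
      ⁅x, y⁆ ∈ Submodule.span K (Set.range f) := by
  set T := Submodule.span K (Set.range f)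
  intro x hx y hy
  have aux : ∀ α, ∀ y' ∈ T, ⁅f α, y'⁆ ∈ T := by
    intro α y' hy'
    refine Submodule.span_induction ?_ ?_ ?_ ?_ hy'
    · rintro m ⟨β, rfl⟩; exact hbase α β
    · rw [lie_zero]; exact T.zero_mem
    · intro a b _ _ ha hb; rw [lie_add]; exact T.add_mem ha hb
    · intro t a _ ha; rw [lie_smul]; exact T.smul_mem t ha
  refine Submodule.span_induction ?_ ?_ ?_ ?_ hx
  · rintro m ⟨α, rfl⟩; exact aux α y hy
  · rw [zero_lie]; exact T.zero_mem
  · intro a b _ _ ha hb; rw [add_lie]; exact T.add_mem ha hb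
  · intro t a _ ha; rw [smul_lie]; exact T.smul_mem t ha

end GenericHelpers


section Struct

variable (K : Type*) [Field K] (r : ℕ)

lemma lie_mem_lcs1 (x y : FreeNilpotentLie K r 3) :
    ⁅x, y⁆ ∈ LieModule.lowerCentralSeries K (FreeNilpotentLie K r 3) (FreeNilpotentLie K r 3) 1 :=
  lie_mem_lcs1_gen x y

lemma g1_sup_lcs1 :
    FreeNilpotentLie.G1 K r 3 ⊔
      (LieModule.lowerCentralSeries K (FreeNilpotentLie K r 3) (FreeNilpotentLie K r 3) 1).toSubmodule
      = ⊤ := by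
  set W := FreeNilpotentLie.G1 K r 3 ⊔
      (LieModule.lowerCentralSeries K (FreeNilpotentLie K r 3) (FreeNilpotentLie K r 3) 1).toSubmodule
    with hW
  let S : LieSubalgebra K (FreeNilpotentLie K r 3) :=
    { W with
      lie_mem' := fun {x y} _ _ =>
        Submodule.mem_sup_right (lie_mem_lcs1 K r x y) }
  have hS : LieSubalgebra.lieSpan K (FreeNilpotentLie K r 3)
      (Set.range (FreeNilpotentLie.gen K r 3)) ≤ S := by
    rw [LieSubalgebra.lieSpan_le]
    rintro _ ⟨i, rfl⟩
    exact Submodule.mem_sup_left (Submodule.subset_span (Set.mem_range_self i))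
  rw [gen_lieSpan_top] at hS
  rw [eq_top_iff]
  intro x _
  exact hS (LieSubalgebra.mem_top x)

lemma lcs1_lie_eq_zero :
    ∀ u ∈ LieModule.lowerCentralSeries K (FreeNilpotentLie K r 3) (FreeNilpotentLie K r 3) 1,
    ∀ v ∈ LieModule.lowerCentralSeries K (FreeNilpotentLie K r 3) (FreeNilpotentLie K r 3) 1,
    ⁅u, v⁆ = (0 : FreeNilpotentLie K r 3) :=
  lcs1_abelian_of (derived_abelian K r)

lemma finiteDimensional_L3 : FiniteDimensional K (FreeNilpotentLie K r 3) := by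
  classical
  let f : (Fin r ⊕ (Fin r × Fin r) ⊕ (Fin r × Fin r × Fin r)) → FreeNilpotentLie K r 3 :=
    fun t => Sum.rec (fun i => FreeNilpotentLie.gen K r 3 i)
      (fun t' => Sum.rec
        (fun ij => ⁅FreeNilpotentLie.gen K r 3 ij.1, FreeNilpotentLie.gen K r 3 ij.2⁆)
        (fun ijk => ⁅FreeNilpotentLie.gen K r 3 ijk.1,
          ⁅FreeNilpotentLie.gen K r 3 ijk.2.1, FreeNilpotentLie.gen K r 3 ijk.2.2⁆⁆) t') t
  set T := Submodule.span K (Set.range f) with hT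
  have hbase : ∀ α β, ⁅f α, f β⁆ ∈ T := by
    rintro (i | ⟨i, j⟩ | ⟨i, j, k⟩) (l | ⟨l, m⟩ | ⟨l, m, n⟩)
    · exact Submodule.subset_span ⟨Sum.inr (Sum.inl (i, l)), rfl⟩
    · exact Submodule.subset_span ⟨Sum.inr (Sum.inr (i, l, m)), rfl⟩
    · show ⁅_, ⁅_, ⁅_, _⁆⁆⁆ ∈ T
      rw [quad_bracket]; exact T.zero_mem
    · show ⁅⁅_, _⁆, _⁆ ∈ T
      rw [← lie_skew]
      exact T.neg_mem (Submodule.subset_span ⟨Sum.inr (Sum.inr (l, i, j)), rfl⟩)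
    · show ⁅⁅_, _⁆, ⁅_, _⁆⁆ ∈ T
      rw [derived_abelian]; exact T.zero_mem
    · show ⁅⁅_, _⁆, ⁅_, _⁆⁆ ∈ T
      rw [derived_abelian]; exact T.zero_mem
    · show ⁅⁅_, _⁆, _⁆ ∈ T
      rw [← lie_skew, quad_bracket, neg_zero]; exact T.zero_mem
    · show ⁅⁅_, _⁆, ⁅_, _⁆⁆ ∈ T
      rw [derived_abelian]; exact T.zero_mem
    · show ⁅⁅_, _⁆, ⁅_, _⁆⁆ ∈ T
      rw [derived_abelian]; exact T.zero_mem
  have hlie : ∀ x ∈ T, ∀ y ∈ T, ⁅x, y⁆ ∈ T := span_lie_closed f hbase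
  have hTtop : T = ⊤ := by
    let S : LieSubalgebra K (FreeNilpotentLie K r 3) :=
      { T with lie_mem' := fun {x y} hx hy => hlie x hx y hy }
    have hS : LieSubalgebra.lieSpan K (FreeNilpotentLie K r 3)
        (Set.range (FreeNilpotentLie.gen K r 3)) ≤ S := by
      rw [LieSubalgebra.lieSpan_le]
      rintro _ ⟨i, rfl⟩
      exact Submodule.subset_span ⟨Sum.inl i, rfl⟩
    rw [gen_lieSpan_top] at hS
    rw [eq_top_iff]
    intro x _
    exact hS (LieSubalgebra.mem_top x)
  have : Module.Finite K (FreeNilpotentLie K r 3) :=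
    Module.finite_def.mpr (hTtop ▸ Submodule.fg_span (Set.finite_range f))
  exact this

end Struct


section LinAlg

variable {K E : Type*} [Field K] [AddCommGroup E] [Module K E] [FiniteDimensional K E]

set_option maxHeartbeats 1000000 in
set_option synthInstance.maxHeartbeats 400000 in
/-- Abstract rank computation: if `E = G ⊔ V`, the form `B` vanishes on `V × V`,
`B` is skew, and `η ↦ B (·, η)|_G` maps `V` onto `Dual G`, then the kernel of
`v ↦ B (·, v)` has codimension `2 · dim G`. -/
lemma finrank_ker_flip (B : E →ₗ[K] E →ₗ[K] K) (G V : Submodule K E)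
    (hGV : G ⊔ V = ⊤)
    (hVV : ∀ u ∈ V, ∀ v ∈ V, B u v = 0)
    (hskew : ∀ x y : E, B x y = - B y x)
    (hsurj : ∀ g : Module.Dual K G, ∃ η ∈ V, ∀ ξ : G, B ξ η = g ξ) :
    Module.finrank K (LinearMap.ker B.flip) =
      Module.finrank K E - 2 * Module.finrank K G := by
  classical
  let Φ₁ : E →ₗ[K] Module.Dual K G := G.subtype.dualMap ∘ₗ B.flip
  let Φ₂ : E →ₗ[K] Module.Dual K V := V.subtype.dualMap ∘ₗ B.flip
  have hΦ₁_apply : ∀ (v : E) (ξ : G), Φ₁ v ξ = B ξ v := fun v ξ => rfl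
  have hΦ₂_apply : ∀ (v : E) (η : V), Φ₂ v η = B η v := fun v η => rfl
  -- Φ₂ vanishes on V
  have hΦ₂V : ∀ v ∈ V, Φ₂ v = 0 := by
    intro v hv
    ext η
    simpa [hΦ₂_apply] using hVV η.1 η.2 v hv
  -- Φ₂ is injective on G
  have hΦ₂G_inj : ∀ g ∈ G, Φ₂ g = 0 → g = 0 := by
    intro g hg h0
    have hall : ∀ φ : Module.Dual K G, φ ⟨g, hg⟩ = 0 := by
      intro φ
      obtain ⟨η, hηV, hη⟩ := hsurj φ
      have h1 : B g η = φ ⟨g, hg⟩ := hη ⟨g, hg⟩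
      have h2 : B η g = 0 := by
        have := congrFun (congrArg DFunLike.coe h0) ⟨η, hηV⟩
        simpa [hΦ₂_apply] using this
      rw [← h1, hskew g η, h2, neg_zero]
    have : (⟨g, hg⟩ : G) = 0 := (Module.forall_dual_apply_eq_zero_iff K _).mp hall
    simpa using congrArg Subtype.val this
  -- rank of Φ₂ equals finrank G
  have hrank₂ : Module.finrank K (LinearMap.range Φ₂) = Module.finrank K G := by
    have hrange : LinearMap.range Φ₂ = LinearMap.range (Φ₂ ∘ₗ G.subtype) := by
      apply le_antisymm
      · rintro _ ⟨v, rfl⟩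
        have hv : v ∈ G ⊔ V := hGV ▸ Submodule.mem_top
        obtain ⟨g, hg, u, hu, rfl⟩ := Submodule.mem_sup.mp hv
        rw [map_add, hΦ₂V u hu, add_zero]
        exact ⟨⟨g, hg⟩, rfl⟩
      · rintro _ ⟨g, rfl⟩
        exact ⟨g.1, rfl⟩
    rw [hrange, LinearMap.finrank_range_of_inj]
    intro a b hab
    have hmem : a.1 - b.1 ∈ G := G.sub_mem a.2 b.2
    have h0 : Φ₂ (a.1 - b.1) = 0 := by
      rw [map_sub]
      rw [sub_eq_zero]
      exact hab
    have := hΦ₂G_inj _ hmem h0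
    exact Subtype.ext (by rwa [sub_eq_zero] at this)
  -- restrict Φ₁ to the kernel of Φ₂
  set q : Submodule K E := LinearMap.ker Φ₂ with hq
  let D : q →ₗ[K] Module.Dual K G := Φ₁.domRestrict q
  -- D is surjective
  have hD_surj : Function.Surjective D := by
    intro g
    obtain ⟨η, hηV, hη⟩ := hsurj g
    refine ⟨⟨η, ?_⟩, ?_⟩
    · exact LinearMap.mem_ker.mpr (hΦ₂V η hηV)
    · ext ξ
      exact hη ξ
  have hD_range : Module.finrank K (LinearMap.range D) = Module.finrank K G := by
    rw [LinearMap.range_eq_top.mpr hD_surj]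
    rw [finrank_top, Subspace.dual_finrank_eq]
  -- the kernel of D is equivalent to the kernel of B.flip
  have hkerD : Module.finrank K (LinearMap.ker D) = Module.finrank K (LinearMap.ker B.flip) := by
    let θ : LinearMap.ker D →ₗ[K] E := q.subtype ∘ₗ (LinearMap.ker D).subtype
    have hθ_inj : Function.Injective θ := by
      intro a b hab
      exact Subtype.ext (Subtype.ext hab)
    have hθ_range : LinearMap.range θ = LinearMap.ker B.flip := by
      apply le_antisymm
      · rintro _ ⟨⟨⟨v, hv2⟩, hv1⟩, rfl⟩
        rw [LinearMap.mem_ker]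
        ext w
        have hw : w ∈ G ⊔ V := hGV ▸ Submodule.mem_top
        obtain ⟨g, hg, u, hu, rfl⟩ := Submodule.mem_sup.mp hw
        have hgz : B g v = 0 := by
          have h1 : Φ₁ v = 0 := hv1
          have := congrFun (congrArg DFunLike.coe h1) ⟨g, hg⟩
          simpa [hΦ₁_apply] using this
        have huz : B u v = 0 := by
          have h2 : Φ₂ v = 0 := hv2
          have := congrFun (congrArg DFunLike.coe h2) ⟨u, hu⟩
          simpa [hΦ₂_apply] using this
        show B (g + u) v = 0
        rw [map_add, LinearMap.add_apply, hgz, huz, add_zero]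
      · intro v hv
        have hvz : ∀ w : E, B w v = 0 := by
          intro w
          have := congrFun (congrArg DFunLike.coe (LinearMap.mem_ker.mp hv)) w
          simpa using this
        have hv2 : v ∈ q := by
          rw [hq, LinearMap.mem_ker]
          ext η
          simp [hΦ₂_apply, hvz]
        have hv1 : (⟨v, hv2⟩ : q) ∈ LinearMap.ker D := by
          rw [LinearMap.mem_ker]
          ext ξ
          simp only [D, LinearMap.domRestrict_apply]
          rw [hΦ₁_apply]
          exact hvz ξ
        exact ⟨⟨⟨v, hv2⟩, hv1⟩, rfl⟩
    rw [← hθ_range]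
    exact (LinearEquiv.ofInjective θ hθ_inj).finrank_eq
  -- assemble via two rank–nullity computations
  have h1 : Module.finrank K (LinearMap.range Φ₂) + Module.finrank K q
      = Module.finrank K E := LinearMap.finrank_range_add_finrank_ker Φ₂
  have h2 : Module.finrank K (LinearMap.range D) + Module.finrank K (LinearMap.ker D)
      = Module.finrank K q := LinearMap.finrank_range_add_finrank_ker D
  rw [hrank₂] at h1
  rw [hD_range, hkerD] at h2
  omega

end LinAlg

/-- Let `L` be the free nilpotent Lie algebra of rank `r ≥ 2` and step 3
over a field of characteristic zero.  If `p ∈ L*` is such that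
`β : C₁(L) → G₁*`, `η ↦ (x ↦ p ⁅x, η⁆)|_{G₁}`, is surjective, then the radical of `B_p`
has dimension `dim L − 2r`, i.e. `B_p` has rank `2r`. -/
theorem finrank_radical_eq_of_surjective
    (K : Type*) [Field K] [CharZero K] (r : ℕ) (hr : 2 ≤ r)
    (p : Module.Dual K (FreeNilpotentLie K r 3))
    (hsurj : ∀ g : Module.Dual K (FreeNilpotentLie.G1 K r 3),
      ∃ η ∈ LieModule.lowerCentralSeries K (FreeNilpotentLie K r 3)
        (FreeNilpotentLie K r 3) 1,
        ∀ ξ : FreeNilpotentLie.G1 K r 3, p ⁅(ξ : FreeNilpotentLie K r 3), η⁆ = g ξ) :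
    Module.finrank K (radicalBp p) =
      Module.finrank K (FreeNilpotentLie K r 3) - 2 * r := by
  classical
  have hFD : FiniteDimensional K (FreeNilpotentLie K r 3) := finiteDimensional_L3 K r
  -- the bilinear form
  let B : FreeNilpotentLie K r 3 →ₗ[K] FreeNilpotentLie K r 3 →ₗ[K] K :=
    ((LieAlgebra.ad K (FreeNilpotentLie K r 3)).toLinearMap).compr₂ p
  have hB_apply : ∀ x y : FreeNilpotentLie K r 3, B x y = p ⁅x, y⁆ := fun x y => rfl
  set G := FreeNilpotentLie.G1 K r 3 with hG
  set V := (LieModule.lowerCentralSeries K (FreeNilpotentLie K r 3)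
      (FreeNilpotentLie K r 3) 1).toSubmodule with hV
  have hGV : G ⊔ V = ⊤ := g1_sup_lcs1 K r
  have hVV : ∀ u ∈ V, ∀ v ∈ V, B u v = 0 := by
    intro u hu v hv
    rw [hB_apply, lcs1_lie_eq_zero K r u hu v hv, map_zero]
  have hskew : ∀ x y : FreeNilpotentLie K r 3, B x y = - B y x := by
    intro x y
    rw [hB_apply, hB_apply, ← map_neg, lie_skew]
  have hsurj' : ∀ g : Module.Dual K G, ∃ η ∈ V, ∀ ξ : G, B ξ η = g ξ := by
    intro g
    obtain ⟨η, hη, hprop⟩ := hsurj g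
    exact ⟨η, hη, fun ξ => hprop ξ⟩
  have hrad : radicalBp p = LinearMap.ker B.flip := by
    ext v
    constructor
    · intro hv
      rw [LinearMap.mem_ker]
      ext w
      exact hv w
    · intro hv
      intro w
      have := congrFun (congrArg DFunLike.coe (LinearMap.mem_ker.mp hv)) w
      simpa [hB_apply] using this
  have hG1 : Module.finrank K G = r := by
    rw [hG]
    rw [FreeNilpotentLie.G1, finrank_span_eq_card (gen_linearIndependent K r),
      Fintype.card_fin]
  rw [hrad, finrank_ker_flip B G V hGV hVV hskew hsurj', hG1]
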